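/- Let K and K̂ be real symmetric positive semidefinite N × N matrices, λ > 0, and k, k̂ ∈ ℝ^N. Then |kᵀ(K + λI)^{-1}k − k̂ᵀ(K̂ + λI)^{-1}k̂| ≤ ((‖k‖_2 + ‖k̂‖_2)/λ) ‖k − k̂‖_2 + (‖k‖_2² / λ²) ‖K − K̂‖_op, where ‖·‖_op denotes the matrix operator norm. -/

import Mathlib

open Matrix

/-- The Euclidean (ℓ²) norm of a vector in `ℝ^N`. -/
noncomputable def l2norm {N : ℕ} (v : Fin N → ℝ) : ℝ :=
  Real.sqrt (∑ i, v i ^ 2)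

/-- The ℓ²-operator norm (largest singular value) of a real matrix. -/
noncomputable def matOpNorm {N M : ℕ} (A : Matrix (Fin N) (Fin M) ℝ) : ℝ :=
  ‖LinearMap.toContinuousLinearMap (Matrix.toEuclideanLin A)‖

namespace Stmt14Aux

variable {N : ℕ}

lemma l2norm_eq (v : Fin N → ℝ) : l2norm v = ‖(WithLp.equiv 2 (Fin N → ℝ)).symm v‖ := by
  rw [EuclideanSpace.norm_eq]
  simp [l2norm, Real.norm_eq_abs, sq_abs]

lemma l2norm_nonneg (v : Fin N → ℝ) : 0 ≤ l2norm v := Real.sqrt_nonneg _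

lemma sq_l2norm (v : Fin N → ℝ) : l2norm v ^ 2 = ∑ i, v i ^ 2 := by
  rw [l2norm, Real.sq_sqrt]
  positivity

lemma abs_dot_le (v w : Fin N → ℝ) : |v ⬝ᵥ w| ≤ l2norm v * l2norm w := by
  rw [l2norm_eq, l2norm_eq]
  have h := abs_real_inner_le_norm ((WithLp.equiv 2 (Fin N → ℝ)).symm v)
    ((WithLp.equiv 2 (Fin N → ℝ)).symm w)
  rw [dotProduct_comm]
  simpa only [WithLp.equiv_symm_apply, EuclideanSpace.inner_toLp_toLp, star_trivial] using h

lemma mulVec_l2norm_le (A : Matrix (Fin N) (Fin N) ℝ) (v : Fin N → ℝ) :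
    l2norm (A *ᵥ v) ≤ matOpNorm A * l2norm v := by
  rw [l2norm_eq, l2norm_eq]
  have h := (LinearMap.toContinuousLinearMap (Matrix.toEuclideanLin A)).le_opNorm
    ((WithLp.equiv 2 (Fin N → ℝ)).symm v)
  simpa only [matOpNorm, LinearMap.coe_toContinuousLinearMap',
    WithLp.equiv_symm_apply, Matrix.toEuclideanLin_apply_piLp_toLp] using h

lemma matOpNorm_nonneg (A : Matrix (Fin N) (Fin N) ℝ) : 0 ≤ matOpNorm A := norm_nonneg _

lemma matOpNorm_neg (A : Matrix (Fin N) (Fin N) ℝ) : matOpNorm (-A) = matOpNorm A := by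
  rw [matOpNorm, matOpNorm, map_neg, map_neg, norm_neg]

lemma posDef_add (K : Matrix (Fin N) (Fin N) ℝ) (hK : K.PosSemidef)
    {lam : ℝ} (hlam : 0 < lam) :
    (K + lam • (1 : Matrix (Fin N) (Fin N) ℝ)).PosDef := by
  refine Matrix.PosDef.posSemidef_add hK ?_
  rw [Matrix.smul_one_eq_diagonal]
  exact Matrix.posDef_diagonal_iff.mpr fun _ => hlam

lemma inv_mulVec_l2norm_le (K : Matrix (Fin N) (Fin N) ℝ) (hK : K.PosSemidef)
    {lam : ℝ} (hlam : 0 < lam) (x : Fin N → ℝ) :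
    l2norm ((K + lam • (1 : Matrix (Fin N) (Fin N) ℝ))⁻¹ *ᵥ x) ≤ l2norm x / lam := by
  set A := K + lam • (1 : Matrix (Fin N) (Fin N) ℝ) with hAdef
  have hA : A.PosDef := posDef_add K hK hlam
  have hdet : IsUnit A.det := isUnit_iff_ne_zero.mpr hA.det_pos.ne'
  set y := A⁻¹ *ᵥ x with hy
  have hAy : A *ᵥ y = x := by
    rw [hy, Matrix.mulVec_mulVec, Matrix.mul_nonsing_inv A hdet, Matrix.one_mulVec]
  have hKy : 0 ≤ y ⬝ᵥ K *ᵥ y := by simpa using hK.dotProduct_mulVec_nonneg y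
  have hyy : y ⬝ᵥ y = l2norm y ^ 2 := by
    rw [sq_l2norm, dotProduct]
    simp [sq]
  have key : lam * l2norm y ^ 2 ≤ y ⬝ᵥ x := by
    rw [← hAy, hAdef, Matrix.add_mulVec, dotProduct_add, Matrix.smul_mulVec,
      Matrix.one_mulVec, dotProduct_smul, hyy]
    simpa using hKy
  have hcs : y ⬝ᵥ x ≤ l2norm y * l2norm x := le_trans (le_abs_self _) (abs_dot_le y x)
  have hybd : lam * l2norm y ^ 2 ≤ l2norm y * l2norm x := key.trans hcs
  rcases eq_or_lt_of_le (l2norm_nonneg y) with h0 | h0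
  · rw [← h0]; exact div_nonneg (l2norm_nonneg x) hlam.le
  · rw [le_div_iff₀ hlam]
    nlinarith [hybd, h0]

end Stmt14Aux

/-- perturbation bound for the kernel-ridge posterior variance term:
for real symmetric positive semidefinite `K, K̂`, `λ > 0` and vectors `k, k̂`,
`|kᵀ(K + λI)⁻¹k - k̂ᵀ(K̂ + λI)⁻¹k̂|
  ≤ ((‖k‖₂ + ‖k̂‖₂)/λ) ‖k - k̂‖₂ + (‖k‖₂²/λ²) ‖K - K̂‖_op`. -/
theorem stmt_14 {N : ℕ} (K Khat : Matrix (Fin N) (Fin N) ℝ)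
    (hK : K.PosSemidef) (hKhat : Khat.PosSemidef)
    (lam : ℝ) (hlam : 0 < lam) (k khat : Fin N → ℝ) :
    |k ⬝ᵥ (K + lam • (1 : Matrix (Fin N) (Fin N) ℝ))⁻¹.mulVec k -
        khat ⬝ᵥ (Khat + lam • (1 : Matrix (Fin N) (Fin N) ℝ))⁻¹.mulVec khat|
      ≤ ((l2norm k + l2norm khat) / lam) * l2norm (k - khat) +
        (l2norm k ^ 2 / lam ^ 2) * matOpNorm (K - Khat) := by
  open Stmt14Aux in
  set A := K + lam • (1 : Matrix (Fin N) (Fin N) ℝ) with hAdef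
  set B := Khat + lam • (1 : Matrix (Fin N) (Fin N) ℝ) with hBdef
  have hA : A.PosDef := posDef_add K hK hlam
  have hB : B.PosDef := posDef_add Khat hKhat hlam
  have hAdet : IsUnit A.det := isUnit_iff_ne_zero.mpr hA.det_pos.ne'
  have hBdet : IsUnit B.det := isUnit_iff_ne_zero.mpr hB.det_pos.ne'
  have hid : A⁻¹ - B⁻¹ = A⁻¹ * (Khat - K) * B⁻¹ := by
    have h1 : Khat - K = B - A := by rw [hAdef, hBdef]; abel
    rw [h1, Matrix.mul_sub, Matrix.sub_mul, Matrix.mul_assoc A⁻¹ B B⁻¹,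
      Matrix.mul_nonsing_inv B hBdet, Matrix.mul_one,
      Matrix.nonsing_inv_mul A hAdet, Matrix.one_mul]
  have h1 : (A⁻¹ - B⁻¹) *ᵥ k = A⁻¹ *ᵥ ((Khat - K) *ᵥ (B⁻¹ *ᵥ k)) := by
    rw [hid, Matrix.mulVec_mulVec, Matrix.mulVec_mulVec]
  have hdecomp : k ⬝ᵥ A⁻¹ *ᵥ k - khat ⬝ᵥ B⁻¹ *ᵥ khat
      = k ⬝ᵥ (A⁻¹ *ᵥ ((Khat - K) *ᵥ (B⁻¹ *ᵥ k)))
        + (k ⬝ᵥ B⁻¹ *ᵥ (k - khat) + (k - khat) ⬝ᵥ B⁻¹ *ᵥ khat) := by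
    rw [← h1]
    simp only [Matrix.sub_mulVec, Matrix.mulVec_sub, dotProduct_sub,
      sub_dotProduct]
    ring
  -- bounds
  have hT2 : |k ⬝ᵥ B⁻¹ *ᵥ (k - khat)| ≤ l2norm k * (l2norm (k - khat) / lam) := by
    refine (abs_dot_le _ _).trans ?_
    exact mul_le_mul_of_nonneg_left (inv_mulVec_l2norm_le Khat hKhat hlam (k - khat))
      (l2norm_nonneg k)
  have hT3 : |(k - khat) ⬝ᵥ B⁻¹ *ᵥ khat| ≤ l2norm (k - khat) * (l2norm khat / lam) := by
    refine (abs_dot_le _ _).trans ?_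
    exact mul_le_mul_of_nonneg_left (inv_mulVec_l2norm_le Khat hKhat hlam khat)
      (l2norm_nonneg (k - khat))
  have hw1 : l2norm (B⁻¹ *ᵥ k) ≤ l2norm k / lam := inv_mulVec_l2norm_le Khat hKhat hlam k
  have hw2 : l2norm ((Khat - K) *ᵥ (B⁻¹ *ᵥ k)) ≤ matOpNorm (K - Khat) * (l2norm k / lam) := by
    have h := mulVec_l2norm_le (Khat - K) (B⁻¹ *ᵥ k)
    have hKK : matOpNorm (Khat - K) = matOpNorm (K - Khat) := by
      rw [← neg_sub K Khat, matOpNorm_neg]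
    rw [hKK] at h
    refine h.trans ?_
    exact mul_le_mul_of_nonneg_left hw1 (matOpNorm_nonneg _)
  have hT1 : |k ⬝ᵥ (A⁻¹ *ᵥ ((Khat - K) *ᵥ (B⁻¹ *ᵥ k)))|
      ≤ l2norm k * ((matOpNorm (K - Khat) * (l2norm k / lam)) / lam) := by
    refine (abs_dot_le _ _).trans ?_
    refine mul_le_mul_of_nonneg_left ?_ (l2norm_nonneg k)
    refine (inv_mulVec_l2norm_le K hK hlam _).trans ?_
    exact div_le_div_of_nonneg_right hw2 hlam.le |>.trans (le_refl _)
  have habs := abs_add_le (k ⬝ᵥ (A⁻¹ *ᵥ ((Khat - K) *ᵥ (B⁻¹ *ᵥ k))))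
      (k ⬝ᵥ B⁻¹ *ᵥ (k - khat) + (k - khat) ⬝ᵥ B⁻¹ *ᵥ khat)
  have habs2 := abs_add_le (k ⬝ᵥ B⁻¹ *ᵥ (k - khat)) ((k - khat) ⬝ᵥ B⁻¹ *ᵥ khat)
  rw [hdecomp]
  calc |_| ≤ _ := habs
    _ ≤ l2norm k * ((matOpNorm (K - Khat) * (l2norm k / lam)) / lam)
        + (l2norm k * (l2norm (k - khat) / lam) + l2norm (k - khat) * (l2norm khat / lam)) :=
      add_le_add hT1 (habs2.trans (add_le_add hT2 hT3))
    _ = ((l2norm k + l2norm khat) / lam) * l2norm (k - khat)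
        + (l2norm k ^ 2 / lam ^ 2) * matOpNorm (K - Khat) := by
      field_simp
      ring
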